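/- Let s ≥ 2, t ≥ 2 with ℓ = st ≥ 5, let G = Sym(ℓ) act on the set Ω of partitions of {1,...,ℓ} into s blocks of size t, and let n = |Ω| = ℓ!/((t!)^s · s!). Then the minimal base size b(G,Ω) satisfies b(G,Ω) < log₂ n + 1. -/

import Mathlib

namespace Stmt9

open Fin.NatCast Fin.CommRing

/-- block color function: the row index of `x` after shifting by `c`. -/
def kap {ℓ : ℕ} (t c : ℕ) (x : Fin ℓ) : ℕ := ((x.val + c) % ℓ) / t

/-- the `i`-th block of the `c`-shifted partition. -/
def blk (ℓ t c i : ℕ) : Finset (Fin ℓ) := Finset.univ.filter fun x => kap t c x = i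

/-- the `c`-shifted partition into `s` blocks of size `t`. -/
def Pc (ℓ s t c : ℕ) : Finset (Finset (Fin ℓ)) := (Finset.range s).image (blk ℓ t c)

/-- partition obtained from `Pc 0` by swapping points `0` and `m`. -/
def Qp (ℓ s t m : ℕ) [NeZero ℓ] : Finset (Finset (Fin ℓ)) :=
  (Pc ℓ s t 0).image fun b => b.image (Equiv.swap (0 : Fin ℓ) ((m : ℕ) : Fin ℓ))

section Arith

variable {s t ℓ : ℕ}

lemma lpos (hs : 2 ≤ s) (ht : 2 ≤ t) (hl : ℓ = s * t) : 0 < ℓ := by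
  subst hl; positivity

lemma tlel (hs : 2 ≤ s) (ht : 2 ≤ t) (hl : ℓ = s * t) : t ≤ ℓ := by
  subst hl; nlinarith

lemma t1lt (hs : 2 ≤ s) (ht : 2 ≤ t) (hl : ℓ = s * t) : t + 1 < ℓ := by
  subst hl; nlinarith

/-- main quotient computation -/
lemma quot (hs : 2 ≤ s) (ht : 2 ≤ t) (hl : ℓ = s * t) (v c : ℕ) (hv : v < ℓ) (hc : c < t) :
    ((v + c) % ℓ) / t = (v / t + if t ≤ v % t + c then 1 else 0) % s := by
  have ht0 : 0 < t := by omega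
  have hi : v / t < s := by
    rw [Nat.div_lt_iff_lt_mul ht0]; omega
  have hvij : t * (v / t) + v % t = v := Nat.div_add_mod v t
  have hj : v % t < t := Nat.mod_lt _ ht0
  set i := v / t with hidef
  set j := v % t with hjdef
  by_cases h : t ≤ j + c
  · rw [if_pos h]
    have hvc : v + c = t * (i + 1) + (j + c - t) := by
      have h' : t * (i + 1) = t * i + t := by ring
      omega
    have hr : j + c - t < t := by omega
    rcases Nat.lt_or_ge (i + 1) s with his | his
    · have hlt : v + c < ℓ := by
        rw [hvc, hl]
        calc t * (i + 1) + (j + c - t) < t * (i + 1) + t := by omega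
        _ = t * (i + 2) := by ring
        _ ≤ t * s := Nat.mul_le_mul_left _ (by omega)
        _ = s * t := Nat.mul_comm _ _
      rw [Nat.mod_eq_of_lt hlt, hvc, Nat.mul_add_div ht0, Nat.div_eq_of_lt hr,
        Nat.mod_eq_of_lt his, Nat.add_zero]
    · have hi1 : i + 1 = s := by omega
      have hvc2 : v + c = ℓ + (j + c - t) := by
        rw [hvc, hi1, hl, Nat.mul_comm]
      rw [hvc2, Nat.add_mod_left, Nat.mod_eq_of_lt (by omega : j + c - t < ℓ),
        Nat.div_eq_of_lt hr, hi1, Nat.mod_self]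
  · rw [if_neg h]
    have hvc : v + c = t * i + (j + c) := by omega
    have hlt : v + c < ℓ := by
      rw [hvc, hl]
      calc t * i + (j + c) < t * i + t := by omega
      _ = t * (i + 1) := by ring
      _ ≤ t * s := Nat.mul_le_mul_left _ (by omega)
      _ = s * t := Nat.mul_comm _ _
    rw [Nat.mod_eq_of_lt hlt, hvc, Nat.mul_add_div ht0,
      Nat.div_eq_of_lt (by omega : j + c < t), Nat.add_zero]
    exact (Nat.mod_eq_of_lt hi).symm

lemma kap0_eq (x : Fin ℓ) : kap t 0 x = x.val / t := by
  unfold kap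
  rw [Nat.add_zero, Nat.mod_eq_of_lt x.isLt]

lemma kap_lt (hs : 2 ≤ s) (ht : 2 ≤ t) (hl : ℓ = s * t) (c : ℕ) (x : Fin ℓ) :
    kap t c x < s := by
  unfold kap
  rw [Nat.div_lt_iff_lt_mul (by omega : 0 < t), ← hl]
  exact Nat.mod_lt _ (lpos hs ht hl)

/-- `kap t 1 w = kap t 0 (w + 1)` -/
lemma kap_one [NeZero ℓ] (hs : 2 ≤ s) (ht : 2 ≤ t) (hl : ℓ = s * t) (w : Fin ℓ) :
    kap t 1 w = kap t 0 (w + 1) := by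
  have h2 : 2 ≤ ℓ := le_trans ht (tlel hs ht hl)
  unfold kap
  have hv : ((w + 1 : Fin ℓ) : ℕ) = (w.val + 1) % ℓ := by
    rw [Fin.val_add, Fin.val_one', Nat.mod_eq_of_lt (by omega : 1 < ℓ)]
  rw [hv]
  have h0 : ((w.val + 1) % ℓ + 0) % ℓ = (w.val + 1) % ℓ := by
    rw [Nat.add_zero]; exact Nat.mod_eq_of_lt (Nat.mod_lt _ (by omega))
  rw [h0]

/-- characterization of when consecutive elements lie in different rows -/
lemma consec [NeZero ℓ] (hs : 2 ≤ s) (ht : 2 ≤ t) (hl : ℓ = s * t) (v : Fin ℓ) :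
    kap t 0 v ≠ kap t 0 (v - 1) ↔ t ∣ v.val := by
  have hl0 : 2 ≤ ℓ := le_trans ht (tlel hs ht hl)
  have hone : ((1 : Fin ℓ) : ℕ) = 1 := by
    rw [Fin.val_one', Nat.mod_eq_of_lt]; omega
  have hsub : ((v - 1 : Fin ℓ) : ℕ) = (ℓ - 1 + v.val) % ℓ := by
    rw [Fin.sub_def, hone]
  rw [kap0_eq, kap0_eq, hsub]
  rcases Nat.eq_zero_or_pos v.val with h0 | hpos
  · rw [h0]
    have : (ℓ - 1 + 0) % ℓ = ℓ - 1 := by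
      rw [Nat.add_zero, Nat.mod_eq_of_lt (by omega)]
    rw [this]
    have hl1 : ℓ - 1 = t * (s - 1) + (t - 1) := by
      have h' : t * (s - 1) + t = t * s := by
        have : s - 1 + 1 = s := by omega
        calc t * (s - 1) + t = t * (s - 1 + 1) := by ring
        _ = t * s := by rw [this]
      have h'' : ℓ = t * s := by rw [hl, Nat.mul_comm]
      omega
    have : (ℓ - 1) / t = (s - 1) + (t-1)/t := by
      rw [hl1, Nat.mul_add_div (by omega)]
    rw [this, Nat.div_eq_of_lt (by omega), Nat.div_eq_of_lt (by omega)]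
    constructor
    · intro _; exact Nat.dvd_zero t
    · intro _; omega
  · have : (ℓ - 1 + v.val) % ℓ = v.val - 1 := by
      have : ℓ - 1 + v.val = ℓ + (v.val - 1) := by omega
      rw [this, Nat.add_mod_left, Nat.mod_eq_of_lt (by omega)]
    rw [this]
    obtain ⟨d, hd⟩ : ∃ d, v.val = d + 1 := ⟨v.val - 1, by omega⟩
    rw [hd]
    have hsd : (d + 1) / t = d / t + if t ∣ d + 1 then 1 else 0 := Nat.succ_div (a := d) (b := t)
    simp only [Nat.add_sub_cancel]
    constructor
    · intro hne
      by_contra hnd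
      rw [hsd, if_neg hnd] at hne; omega
    · intro hdvd
      rw [hsd, if_pos hdvd]; omega

/-- two values divisible by `t`, differing by `2`, contradiction when `3 ≤ t` -/
lemma div2_contra [NeZero ℓ] (hs : 2 ≤ s) (ht : 3 ≤ t) (hl : ℓ = s * t) (u : Fin ℓ)
    (h1 : t ∣ u.val) (h2 : t ∣ ((u + ((2:ℕ) : Fin ℓ)).val)) : False := by
  have hl0 : 2 < ℓ := by have := tlel hs (by omega) hl; omega
  have hv2 : (((2:ℕ) : Fin ℓ) : ℕ) = 2 := by
    rw [Fin.val_natCast, Nat.mod_eq_of_lt hl0]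
  rw [Fin.val_add, hv2] at h2
  have hdl : t ∣ ℓ := ⟨s, by rw [hl, Nat.mul_comm]⟩
  rcases Nat.lt_or_ge (u.val + 2) ℓ with h | h
  · rw [Nat.mod_eq_of_lt h] at h2
    have hx : t ∣ u.val + 2 - u.val := Nat.dvd_sub h2 h1
    rw [Nat.add_sub_cancel_left] at hx
    have := Nat.le_of_dvd (by omega) hx; omega
  · have hu : u.val + 2 - ℓ < ℓ := by have := u.isLt; omega
    have : (u.val + 2) % ℓ = u.val + 2 - ℓ := by
      have hh : u.val + 2 = ℓ + (u.val + 2 - ℓ) := by have := u.isLt; omega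
      conv_lhs => rw [hh]
      rw [Nat.add_mod_left, Nat.mod_eq_of_lt hu]
    rw [this] at h2
    have ht2 : t ∣ u.val + 2 := by
      have := Nat.dvd_add h2 hdl; rwa [Nat.sub_add_cancel h] at this
    have hx : t ∣ u.val + 2 - u.val := Nat.dvd_sub ht2 h1
    rw [Nat.add_sub_cancel_left] at hx
    have := Nat.le_of_dvd (by omega) hx; omega

end Arith

section Parts

variable {s t ℓ : ℕ}

lemma mem_blk {c i : ℕ} {x : Fin ℓ} : x ∈ blk ℓ t c i ↔ kap t c x = i := by
  simp [blk]

lemma kap_shift (hs : 2 ≤ s) (ht : 2 ≤ t) (hl : ℓ = s * t) [NeZero ℓ]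
    {c : ℕ} (hc : c < ℓ) (x : Fin ℓ) :
    kap t c x = kap t 0 (x + (c : Fin ℓ)) := by
  unfold kap
  have hv : ((x + (c : Fin ℓ) : Fin ℓ) : ℕ) = (x.val + c) % ℓ := by
    rw [Fin.val_add, Fin.val_natCast, Nat.mod_eq_of_lt hc]
  rw [hv, Nat.add_zero, Nat.mod_mod_of_dvd _ (dvd_refl ℓ)]

lemma blk0_eq_image (hs : 2 ≤ s) (ht : 2 ≤ t) (hl : ℓ = s * t) {i : ℕ} (hi : i < s) :
    blk ℓ t 0 i = (Finset.range t).image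
      (fun j => (⟨(t * i + j) % ℓ, Nat.mod_lt _ (lpos hs ht hl)⟩ : Fin ℓ)) := by
  have ht0 : 0 < t := by omega
  ext x
  rw [mem_blk, kap0_eq, Finset.mem_image]
  constructor
  · intro hx
    refine ⟨x.val % t, Finset.mem_range.mpr (Nat.mod_lt _ ht0), ?_⟩
    apply Fin.ext
    simp only
    rw [← hx]
    have : t * (x.val / t) + x.val % t = x.val := Nat.div_add_mod _ _
    rw [this, Nat.mod_eq_of_lt x.isLt]
  · rintro ⟨j, hj, rfl⟩
    rw [Finset.mem_range] at hj
    have hlt : t * i + j < ℓ := by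
      rw [hl]
      calc t * i + j < t * i + t := by omega
      _ = t * (i + 1) := by ring
      _ ≤ t * s := Nat.mul_le_mul_left _ (by omega)
      _ = s * t := Nat.mul_comm _ _
    simp only
    rw [Nat.mod_eq_of_lt hlt, Nat.mul_add_div ht0, Nat.div_eq_of_lt hj, Nat.add_zero]

lemma blk0_card (hs : 2 ≤ s) (ht : 2 ≤ t) (hl : ℓ = s * t) {i : ℕ} (hi : i < s) :
    (blk ℓ t 0 i).card = t := by
  rw [blk0_eq_image hs ht hl hi, Finset.card_image_of_injOn, Finset.card_range]
  intro a ha b hb hab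
  rw [Finset.mem_coe, Finset.mem_range] at ha hb
  have ha' : t * i + a < ℓ := by
    rw [hl]
    calc t * i + a < t * i + t := by omega
    _ = t * (i + 1) := by ring
    _ ≤ t * s := Nat.mul_le_mul_left _ (by omega)
    _ = s * t := Nat.mul_comm _ _
  have hb' : t * i + b < ℓ := by
    rw [hl]
    calc t * i + b < t * i + t := by omega
    _ = t * (i + 1) := by ring
    _ ≤ t * s := Nat.mul_le_mul_left _ (by omega)
    _ = s * t := Nat.mul_comm _ _
  have := congrArg Fin.val hab
  simp only at this
  rw [Nat.mod_eq_of_lt ha', Nat.mod_eq_of_lt hb'] at this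
  omega

lemma blk_eq_image (hs : 2 ≤ s) (ht : 2 ≤ t) (hl : ℓ = s * t) [NeZero ℓ]
    {c : ℕ} (hc : c < ℓ) (i : ℕ) :
    blk ℓ t c i = (blk ℓ t 0 i).image (fun z => z - (c : Fin ℓ)) := by
  ext x
  rw [mem_blk, Finset.mem_image]
  constructor
  · intro hx
    refine ⟨x + (c : Fin ℓ), ?_, by abel⟩
    rw [mem_blk, ← kap_shift hs ht hl hc]
    exact hx
  · rintro ⟨w, hw, rfl⟩
    rw [mem_blk] at hw
    rw [kap_shift hs ht hl hc, sub_add_cancel]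
    exact hw

lemma blk_card (hs : 2 ≤ s) (ht : 2 ≤ t) (hl : ℓ = s * t) [NeZero ℓ]
    {c i : ℕ} (hc : c < ℓ) (hi : i < s) :
    (blk ℓ t c i).card = t := by
  rw [blk_eq_image hs ht hl hc, Finset.card_image_of_injective _ (sub_left_injective),
    blk0_card hs ht hl hi]

lemma blk_nonempty (hs : 2 ≤ s) (ht : 2 ≤ t) (hl : ℓ = s * t) [NeZero ℓ]
    {c i : ℕ} (hc : c < ℓ) (hi : i < s) : ∃ x : Fin ℓ, kap t c x = i := by
  have hl0 : 0 < ℓ := lpos hs ht hl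
  refine ⟨⟨(t * i + (ℓ - c)) % ℓ, Nat.mod_lt _ hl0⟩, ?_⟩
  unfold kap
  simp only
  rw [Nat.mod_add_mod]
  have h1 : t * i + (ℓ - c) + c = t * i + ℓ := by omega
  have hti : t * i < ℓ := by
    rw [hl]
    calc t * i < t * i + t := by omega
    _ = t * (i + 1) := by ring
    _ ≤ t * s := Nat.mul_le_mul_left _ (by omega)
    _ = s * t := Nat.mul_comm _ _
  rw [h1, Nat.add_mod_right, Nat.mod_eq_of_lt hti, Nat.mul_div_cancel_left _ (by omega : 0 < t)]

lemma Pc_mem {c : ℕ} {b : Finset (Fin ℓ)} :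
    b ∈ Pc ℓ s t c ↔ ∃ i < s, b = blk ℓ t c i := by
  simp only [Pc, Finset.mem_image, Finset.mem_range]
  constructor
  · rintro ⟨i, hi, rfl⟩; exact ⟨i, hi, rfl⟩
  · rintro ⟨i, hi, rfl⟩; exact ⟨i, hi, rfl⟩

lemma Pc_card (hs : 2 ≤ s) (ht : 2 ≤ t) (hl : ℓ = s * t) [NeZero ℓ]
    {c : ℕ} (hc : c < ℓ) : (Pc ℓ s t c).card = s := by
  rw [Pc, Finset.card_image_of_injOn, Finset.card_range]
  intro i hi i' hi' h
  rw [Finset.mem_coe, Finset.mem_range] at hi hi'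
  obtain ⟨x, hx⟩ := blk_nonempty hs ht hl hc hi
  have h1 : x ∈ blk ℓ t c i := mem_blk.mpr hx
  rw [h] at h1
  rw [mem_blk] at h1
  omega

lemma Pc_uniq (hs : 2 ≤ s) (ht : 2 ≤ t) (hl : ℓ = s * t) {c : ℕ} (x : Fin ℓ) :
    ∃! b : Finset (Fin ℓ), b ∈ Pc ℓ s t c ∧ x ∈ b := by
  refine ⟨blk ℓ t c (kap t c x), ⟨Pc_mem.mpr ⟨_, kap_lt hs ht hl c x, rfl⟩, mem_blk.mpr rfl⟩, ?_⟩
  rintro b ⟨hb, hxb⟩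
  obtain ⟨i, hi, rfl⟩ := Pc_mem.mp hb
  rw [mem_blk] at hxb
  rw [hxb]

/-- transport of partition properties along a permutation, applied blockwise -/
lemma perm_part (σ : Equiv.Perm (Fin ℓ)) (P : Finset (Finset (Fin ℓ)))
    (h1 : P.card = s) (h2 : ∀ b ∈ P, b.card = t)
    (h3 : ∀ x : Fin ℓ, ∃! b : Finset (Fin ℓ), b ∈ P ∧ x ∈ b) :
    (P.image fun b => b.image σ).card = s ∧
    (∀ b ∈ P.image (fun b => b.image σ), b.card = t) ∧
    (∀ x : Fin ℓ, ∃! b : Finset (Fin ℓ), b ∈ P.image (fun b => b.image σ) ∧ x ∈ b) := by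
  refine ⟨?_, ?_, ?_⟩
  · rw [Finset.card_image_of_injective _ (Finset.image_injective σ.injective), h1]
  · intro b hb
    obtain ⟨b0, hb0, rfl⟩ := Finset.mem_image.mp hb
    rw [Finset.card_image_of_injective _ σ.injective]
    exact h2 b0 hb0
  · intro x
    obtain ⟨b0, ⟨hb0P, hb0x⟩, hb0u⟩ := h3 (σ.symm x)
    refine ⟨b0.image σ, ⟨Finset.mem_image_of_mem _ hb0P, ?_⟩, ?_⟩
    · rw [Finset.mem_image]
      exact ⟨σ.symm x, hb0x, σ.apply_symm_apply x⟩
    · rintro b ⟨hbP, hbx⟩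
      obtain ⟨b1, hb1, rfl⟩ := Finset.mem_image.mp hbP
      have : σ.symm x ∈ b1 := by
        rw [Finset.mem_image] at hbx
        obtain ⟨u, hu, hux⟩ := hbx
        have : u = σ.symm x := by
          apply σ.injective
          rw [hux, σ.apply_symm_apply]
        rwa [← this]
      rw [hb0u b1 ⟨hb1, this⟩]

/-- block-membership invariance under a partition-preserving permutation -/
lemma sb_inv (g : Equiv.Perm (Fin ℓ)) (c : ℕ)
    (hg : (Pc ℓ s t c).image (fun b => b.image g) = Pc ℓ s t c)
    (hs : 2 ≤ s) (ht : 2 ≤ t) (hl : ℓ = s * t) (x y : Fin ℓ) :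
    kap t c (g x) = kap t c (g y) ↔ kap t c x = kap t c y := by
  constructor
  · intro h
    have hb' : blk ℓ t c (kap t c (g x)) ∈ Pc ℓ s t c :=
      Pc_mem.mpr ⟨_, kap_lt hs ht hl c (g x), rfl⟩
    rw [← hg, Finset.mem_image] at hb'
    obtain ⟨b, hb, hbe⟩ := hb'
    have hgx : g x ∈ b.image g := by rw [hbe]; exact mem_blk.mpr rfl
    have hgy : g y ∈ b.image g := by rw [hbe]; exact mem_blk.mpr h.symm
    have hx : x ∈ b := by
      obtain ⟨u, hu, hux⟩ := Finset.mem_image.mp hgx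
      rwa [← g.injective hux]
    have hy : y ∈ b := by
      obtain ⟨u, hu, huy⟩ := Finset.mem_image.mp hgy
      rwa [← g.injective huy]
    obtain ⟨i, hi, rfl⟩ := Pc_mem.mp hb
    rw [mem_blk] at hx hy
    rw [hx, hy]
  · intro h
    have hb : blk ℓ t c (kap t c x) ∈ Pc ℓ s t c :=
      Pc_mem.mpr ⟨_, kap_lt hs ht hl c x, rfl⟩
    have hbg : (blk ℓ t c (kap t c x)).image g ∈ Pc ℓ s t c := by
      rw [← hg]
      exact Finset.mem_image_of_mem _ hb
    obtain ⟨i, hi, hie⟩ := Pc_mem.mp hbg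
    have hgx : g x ∈ blk ℓ t c i := by
      rw [← hie]
      exact Finset.mem_image_of_mem _ (mem_blk.mpr rfl)
    have hgy : g y ∈ blk ℓ t c i := by
      rw [← hie]
      exact Finset.mem_image_of_mem _ (mem_blk.mpr h.symm)
    rw [mem_blk] at hgx hgy
    rw [hgx, hgy]

/-- extraction from the swapped partition `Qp` -/
lemma endQ [NeZero ℓ] (hs : 2 ≤ s) (ht : 2 ≤ t) (hl : ℓ = s * t)
    (σ g : Equiv.Perm (Fin ℓ))
    (hQ : (((Pc ℓ s t 0).image fun b => b.image σ).image fun b => b.image g)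
        = (Pc ℓ s t 0).image fun b => b.image σ)
    (hinv : ∀ z, σ (σ z) = z) :
    ∃ i < s, ∀ x : Fin ℓ, x.val < t → (σ (g (σ x))).val / t = i := by
  have hB0 : blk ℓ t 0 0 ∈ Pc ℓ s t 0 := Pc_mem.mpr ⟨0, by omega, rfl⟩
  have hA : ((blk ℓ t 0 0).image σ).image g ∈ (Pc ℓ s t 0).image fun b => b.image σ := by
    rw [← hQ]
    exact Finset.mem_image_of_mem _ (Finset.mem_image_of_mem _ hB0)
  obtain ⟨b, hb, hbe⟩ := Finset.mem_image.mp hA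
  obtain ⟨i, hi, rfl⟩ := Pc_mem.mp hb
  refine ⟨i, hi, fun x hx => ?_⟩
  have hxB : x ∈ blk ℓ t 0 0 := by
    rw [mem_blk, kap0_eq]
    exact Nat.div_eq_of_lt hx
  have : g (σ x) ∈ (blk ℓ t 0 i).image σ := by
    rw [hbe]
    exact Finset.mem_image_of_mem _ (Finset.mem_image_of_mem _ hxB)
  obtain ⟨w, hw, hwe⟩ := Finset.mem_image.mp this
  have : σ (g (σ x)) = w := by rw [← hwe, hinv]
  rw [this]
  rw [mem_blk, kap0_eq] at hw
  exact hw

end Parts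

section Count

variable {s t ℓ : ℕ}

lemma modsucc (hs : 2 ≤ s) {i i' : ℕ} (hi : i < s) (hi' : i' < s) :
    (i + 1) % s = (i' + 1) % s ↔ i = i' := by
  constructor
  · intro h
    by_cases h1 : i + 1 = s <;> by_cases h2 : i' + 1 = s
    · omega
    · rw [h1, Nat.mod_self, Nat.mod_eq_of_lt (by omega)] at h; omega
    · rw [h2, Nat.mod_self, Nat.mod_eq_of_lt (by omega)] at h; omega
    · rw [Nat.mod_eq_of_lt (by omega), Nat.mod_eq_of_lt (by omega)] at h; omega
  · intro h; rw [h]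

lemma mod_succ_ne (hs : 2 ≤ s) {i : ℕ} (hi : i < s) : (i + 1) % s ≠ i := by
  by_cases h1 : i + 1 = s
  · rw [h1, Nat.mod_self]; omega
  · rw [Nat.mod_eq_of_lt (by omega)]; omega

lemma coordu (ht : 0 < t) {a b a' b' : ℕ} (hb : b < t) (hb' : b' < t)
    (h : t * a + b = t * a' + b') : a = a' ∧ b = b' := by
  have h1 : (t * a + b) / t = a := by
    rw [Nat.mul_add_div ht, Nat.div_eq_of_lt hb, Nat.add_zero]
  have h2 : (t * a' + b') / t = a' := by
    rw [Nat.mul_add_div ht, Nat.div_eq_of_lt hb', Nat.add_zero]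
  have haa : a = a' := by rw [← h1, ← h2, h]
  subst haa
  omega

lemma tmul_lt (hs : 2 ≤ s) (ht : 2 ≤ t) (hl : ℓ = s * t) {i j : ℕ} (hi : i < s) (hj : j < t) :
    t * i + j < ℓ := by
  rw [hl]
  calc t * i + j < t * i + t := by omega
  _ = t * (i + 1) := by ring
  _ ≤ t * s := Nat.mul_le_mul_left _ (by omega)
  _ = s * t := Nat.mul_comm _ _

lemma succ_coord (hs : 2 ≤ s) (ht : 2 ≤ t) (hl : ℓ = s * t) {i j : ℕ} (hi : i < s) (hj : j < t) :
    (t * i + j + 1) % ℓ =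
      if j + 1 < t then t * i + (j + 1) else (if i + 1 < s then t * (i + 1) else 0) := by
  by_cases h1 : j + 1 < t
  · rw [if_pos h1]
    have hlt : t * i + j + 1 < ℓ := by have := tmul_lt hs ht hl hi h1; omega
    rw [Nat.mod_eq_of_lt hlt]
    omega
  · rw [if_neg h1]
    have hjt : j + 1 = t := by omega
    have he : t * i + j + 1 = t * (i + 1) := by
      have : t * (i + 1) = t * i + t := by ring
      omega
    by_cases h2 : i + 1 < s
    · rw [if_pos h2, he, Nat.mod_eq_of_lt]
      have := tmul_lt hs ht hl h2 (by omega : 0 < t)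
      omega
    · rw [if_neg h2, he]
      have h3 : i + 1 = s := by omega
      have h4 : t * (i + 1) = ℓ := by rw [h3, hl, Nat.mul_comm]
      rw [h4, Nat.mod_self]

/-- The central counting lemma, asymmetric version. -/
lemma main_count_aux [NeZero ℓ] (hs : 2 ≤ s) (ht : 2 ≤ t) (hl : ℓ = s * t)
    (x y : Fin ℓ) (hle : y.val % t ≤ x.val % t) :
    ((Finset.range t).filter fun c => kap t c x = kap t c y).card = t - 1 ↔
      (y = x + 1 ∨ x = y + 1) := by
  have ht0 : 0 < t := by omega
  have hl2 : 2 ≤ ℓ := le_trans ht (tlel hs ht hl)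
  set i := x.val / t with hidef
  set j := x.val % t with hjdef
  set i' := y.val / t with hi'def
  set j' := y.val % t with hj'def
  have hi : i < s := by rw [hidef, Nat.div_lt_iff_lt_mul ht0, ← hl]; exact x.isLt
  have hi' : i' < s := by rw [hi'def, Nat.div_lt_iff_lt_mul ht0, ← hl]; exact y.isLt
  have hj : j < t := Nat.mod_lt _ ht0
  have hj' : j' < t := Nat.mod_lt _ ht0
  have hxv : x.val = t * i + j := (Nat.div_add_mod x.val t).symm
  have hyv : y.val = t * i' + j' := (Nat.div_add_mod y.val t).symm
  -- pointwise characterization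
  have hval : ∀ c, c < t → (kap t c x = kap t c y ↔
      (i + if t ≤ j + c then 1 else 0) % s = (i' + if t ≤ j' + c then 1 else 0) % s) := by
    intro c hc
    unfold kap
    rw [quot hs ht hl x.val c x.isLt hc, quot hs ht hl y.val c y.isLt hc]
  have hr1 : ∀ c, c < t - j → (kap t c x = kap t c y ↔ i = i') := by
    intro c hcc
    rw [hval c (by omega), if_neg (by omega), if_neg (by omega)]
    have h0 : (i + 0) % s = i := by rw [Nat.add_zero]; exact Nat.mod_eq_of_lt hi
    have h0' : (i' + 0) % s = i' := by rw [Nat.add_zero]; exact Nat.mod_eq_of_lt hi'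
    rw [h0, h0']
  have hr2 : ∀ c, t - j ≤ c → c < t - j' → (kap t c x = kap t c y ↔ (i + 1) % s = i') := by
    intro c hc1 hc2
    rw [hval c (by omega), if_pos (by omega), if_neg (by omega)]
    have h0 : (i' + 0) % s = i' := by rw [Nat.add_zero]; exact Nat.mod_eq_of_lt hi'
    rw [h0]
  have hr3 : ∀ c, t - j' ≤ c → c < t → (kap t c x = kap t c y ↔ i = i') := by
    intro c hc1 hc2
    rw [hval c hc2, if_pos (by omega), if_pos (by omega)]
    exact modsucc hs hi hi'
  -- the count
  have key : ((Finset.range t).filter fun c => kap t c x = kap t c y).card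
      = (if i = i' then (t - j) + j' else 0) + (if (i + 1) % s = i' then j - j' else 0) := by
    rw [Finset.card_filter, Finset.range_eq_Ico]
    rw [← Finset.sum_Ico_consecutive _ (by omega : 0 ≤ t - j') (by omega : t - j' ≤ t)]
    rw [← Finset.sum_Ico_consecutive _ (by omega : 0 ≤ t - j) (by omega : t - j ≤ t - j')]
    have e1 : (∑ c ∈ Finset.Ico 0 (t - j), if kap t c x = kap t c y then 1 else 0)
        = if i = i' then (t - j) else 0 := by
      by_cases hA : i = i'
      · rw [if_pos hA]
        have hcg : ∀ c ∈ Finset.Ico 0 (t - j),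
            (if kap t c x = kap t c y then (1:ℕ) else 0) = 1 := by
          intro c hc
          rw [Finset.mem_Ico] at hc
          rw [if_pos ((hr1 c (by omega)).mpr hA)]
        rw [Finset.sum_congr rfl hcg, Finset.sum_const, Nat.card_Ico, smul_eq_mul,
          Nat.mul_one, Nat.sub_zero]
      · rw [if_neg hA]
        have hcg : ∀ c ∈ Finset.Ico 0 (t - j),
            (if kap t c x = kap t c y then (1:ℕ) else 0) = 0 := by
          intro c hc
          rw [Finset.mem_Ico] at hc
          rw [if_neg (fun hcon => hA ((hr1 c (by omega)).mp hcon))]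
        rw [Finset.sum_congr rfl hcg, Finset.sum_const, smul_eq_mul, Nat.mul_zero]
    have e2 : (∑ c ∈ Finset.Ico (t - j) (t - j'), if kap t c x = kap t c y then 1 else 0)
        = if (i + 1) % s = i' then j - j' else 0 := by
      by_cases hB : (i + 1) % s = i'
      · rw [if_pos hB]
        have hcg : ∀ c ∈ Finset.Ico (t - j) (t - j'),
            (if kap t c x = kap t c y then (1:ℕ) else 0) = 1 := by
          intro c hc
          rw [Finset.mem_Ico] at hc
          rw [if_pos ((hr2 c (by omega) (by omega)).mpr hB)]
        rw [Finset.sum_congr rfl hcg, Finset.sum_const, Nat.card_Ico, smul_eq_mul,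
          Nat.mul_one]
        omega
      · rw [if_neg hB]
        have hcg : ∀ c ∈ Finset.Ico (t - j) (t - j'),
            (if kap t c x = kap t c y then (1:ℕ) else 0) = 0 := by
          intro c hc
          rw [Finset.mem_Ico] at hc
          rw [if_neg (fun hcon => hB ((hr2 c (by omega) (by omega)).mp hcon))]
        rw [Finset.sum_congr rfl hcg, Finset.sum_const, smul_eq_mul, Nat.mul_zero]
    have e3 : (∑ c ∈ Finset.Ico (t - j') t, if kap t c x = kap t c y then 1 else 0)
        = if i = i' then j' else 0 := by
      by_cases hA : i = i'
      · rw [if_pos hA]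
        have hcg : ∀ c ∈ Finset.Ico (t - j') t,
            (if kap t c x = kap t c y then (1:ℕ) else 0) = 1 := by
          intro c hc
          rw [Finset.mem_Ico] at hc
          rw [if_pos ((hr3 c (by omega) (by omega)).mpr hA)]
        rw [Finset.sum_congr rfl hcg, Finset.sum_const, Nat.card_Ico, smul_eq_mul,
          Nat.mul_one]
        omega
      · rw [if_neg hA]
        have hcg : ∀ c ∈ Finset.Ico (t - j') t,
            (if kap t c x = kap t c y then (1:ℕ) else 0) = 0 := by
          intro c hc
          rw [Finset.mem_Ico] at hc
          rw [if_neg (fun hcon => hA ((hr3 c (by omega) (by omega)).mp hcon))]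
        rw [Finset.sum_congr rfl hcg, Finset.sum_const, smul_eq_mul, Nat.mul_zero]
    rw [e1, e2, e3]
    by_cases hA : i = i' <;> by_cases hB : (i + 1) % s = i' <;>
      simp [hA, hB] <;> omega
  -- adjacency translations
  have hone : ((1 : Fin ℓ) : ℕ) = 1 := by
    rw [Fin.val_one', Nat.mod_eq_of_lt (by omega)]
  have hadd : ∀ z : Fin ℓ, ((z + 1 : Fin ℓ) : ℕ) = (z.val + 1) % ℓ := by
    intro z
    rw [Fin.val_add, hone]
  have hyx : (y = x + 1) ↔ t * i' + j' = (t * i + j + 1) % ℓ := by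
    rw [Fin.ext_iff, hadd, ← hxv, ← hyv]
  have hxy : (x = y + 1) ↔ t * i + j = (t * i' + j' + 1) % ℓ := by
    rw [Fin.ext_iff, hadd, ← hxv, ← hyv]
  clear_value i j i' j'
  rw [key, hyx, hxy, succ_coord hs ht hl hi hj, succ_coord hs ht hl hi' hj']
  by_cases hA : i = i' <;> by_cases hB : (i + 1) % s = i'
  · exfalso; rw [hA] at hB; exact mod_succ_ne hs hi' hB
  · -- same row: count = (t-j)+j'
    subst hA
    rw [if_pos rfl, if_neg hB]
    constructor
    · intro h
      have hjj : j = j' + 1 := by omega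
      right
      rw [if_pos (by omega : j' + 1 < t)]
      omega
    · intro h
      rcases h with h | h
      · -- y = x + 1 : impossible given hle etc
        exfalso
        by_cases h1 : j + 1 < t
        · rw [if_pos h1] at h
          obtain ⟨h2, h3⟩ := coordu ht0 hj' (by omega) h
          omega
        · rw [if_neg h1] at h
          by_cases h2 : i + 1 < s
          · rw [if_pos h2] at h
            have h' : t * i + j' = t * (i + 1) + 0 := by omega
            obtain ⟨h3, h4⟩ := coordu ht0 hj' (by omega) h'
            omega
          · rw [if_neg h2] at h
            have h' : t * i + j' = t * 0 + 0 := by omega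
            obtain ⟨h3, h4⟩ := coordu ht0 hj' (by omega) h'
            -- i' = 0, j' = 0, i = i', i+1 = s → s = 1 contradiction? i = i' = 0, i+1=s
            omega
      · -- x = y + 1
        by_cases h1 : j' + 1 < t
        · rw [if_pos h1] at h
          obtain ⟨h2, h3⟩ := coordu ht0 hj (by omega) h
          omega
        · exfalso
          rw [if_neg h1] at h
          -- j' = t - 1, then j' ≤ j < t forces j = t-1 = j', then x-coords (i, t-1) vs boundary
          by_cases h2 : i + 1 < s
          · rw [if_pos h2] at h
            have h' : t * i + j = t * (i + 1) + 0 := by omega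
            obtain ⟨h3, h4⟩ := coordu ht0 hj (by omega) h'
            omega
          · rw [if_neg h2] at h
            have h' : t * i + j = t * 0 + 0 := by omega
            obtain ⟨h3, h4⟩ := coordu ht0 hj (by omega) h'
            omega
  · -- adjacent rows
    rw [if_neg hA, if_pos hB]
    constructor
    · intro h
      have hjj : j = t - 1 ∧ j' = 0 := by omega
      left
      rw [if_neg (by omega : ¬ (j + 1 < t))]
      by_cases h2 : i + 1 < s
      · rw [if_pos h2]
        rw [Nat.mod_eq_of_lt (by omega)] at hB
        subst hB
        omega
      · rw [if_neg h2]
        have hs1 : i + 1 = s := by omega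
        rw [hs1, Nat.mod_self] at hB
        subst hB
        omega
    · intro h
      rcases h with h | h
      · by_cases h1 : j + 1 < t
        · exfalso
          rw [if_pos h1] at h
          obtain ⟨h2, h3⟩ := coordu ht0 hj' (by omega) h
          omega
        · rw [if_neg h1] at h
          by_cases h2 : i + 1 < s
          · rw [if_pos h2] at h
            have h' : t * i' + j' = t * (i + 1) + 0 := by omega
            obtain ⟨h3, h4⟩ := coordu ht0 hj' (by omega) h'
            omega
          · rw [if_neg h2] at h
            have h' : t * i' + j' = t * 0 + 0 := by omega
            obtain ⟨h3, h4⟩ := coordu ht0 hj' (by omega) h'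
            omega
      · exfalso
        by_cases h1 : j' + 1 < t
        · rw [if_pos h1] at h
          obtain ⟨h2, h3⟩ := coordu ht0 hj (by omega) h
          omega
        · rw [if_neg h1] at h
          by_cases h2 : i' + 1 < s
          · rw [if_pos h2] at h
            have h' : t * i + j = t * (i' + 1) + 0 := by omega
            obtain ⟨h3, h4⟩ := coordu ht0 hj (by omega) h'
            omega
          · rw [if_neg h2] at h
            have h' : t * i + j = t * 0 + 0 := by omega
            obtain ⟨h3, h4⟩ := coordu ht0 hj (by omega) h'
            omega
  · rw [if_neg hA, if_neg hB]
    constructor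
    · intro h; exfalso; omega
    · intro h
      exfalso
      rcases h with h | h
      · by_cases h1 : j + 1 < t
        · rw [if_pos h1] at h
          obtain ⟨h2, h3⟩ := coordu ht0 hj' (by omega) h
          omega
        · rw [if_neg h1] at h
          by_cases h2 : i + 1 < s
          · rw [if_pos h2] at h
            have h' : t * i' + j' = t * (i + 1) + 0 := by omega
            obtain ⟨h3, h4⟩ := coordu ht0 hj' (by omega) h'
            rw [Nat.mod_eq_of_lt (by omega)] at hB
            omega
          · rw [if_neg h2] at h
            have h' : t * i' + j' = t * 0 + 0 := by omega
            obtain ⟨h3, h4⟩ := coordu ht0 hj' (by omega) h'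
            have : i + 1 = s := by omega
            rw [this, Nat.mod_self] at hB
            omega
      · by_cases h1 : j' + 1 < t
        · rw [if_pos h1] at h
          obtain ⟨h2, h3⟩ := coordu ht0 hj (by omega) h
          omega
        · rw [if_neg h1] at h
          by_cases h2 : i' + 1 < s
          · rw [if_pos h2] at h
            have h' : t * i + j = t * (i' + 1) + 0 := by omega
            obtain ⟨h3, h4⟩ := coordu ht0 hj (by omega) h'
            omega
          · rw [if_neg h2] at h
            have h' : t * i + j = t * 0 + 0 := by omega
            obtain ⟨h3, h4⟩ := coordu ht0 hj (by omega) h'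
            omega

/-- The central counting lemma. -/
lemma main_count [NeZero ℓ] (hs : 2 ≤ s) (ht : 2 ≤ t) (hl : ℓ = s * t) (x y : Fin ℓ) :
    ((Finset.range t).filter fun c => kap t c x = kap t c y).card = t - 1 ↔
      (y = x + 1 ∨ x = y + 1) := by
  by_cases hle : y.val % t ≤ x.val % t
  · exact main_count_aux hs ht hl x y hle
  · have h := main_count_aux hs ht hl y x (by omega)
    have hsym : ((Finset.range t).filter fun c => kap t c x = kap t c y)
        = ((Finset.range t).filter fun c => kap t c y = kap t c x) := by
      apply Finset.filter_congr
      intro c _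
      constructor <;> (intro h'; exact h'.symm)
    rw [hsym, h]
    exact or_comm

end Count

section Rigid

variable {s t ℓ : ℕ}

lemma adj_pres [NeZero ℓ] (hs : 2 ≤ s) (ht : 2 ≤ t) (hl : ℓ = s * t)
    (g : Equiv.Perm (Fin ℓ))
    (hsb : ∀ c < t, ∀ x y : Fin ℓ, kap t c (g x) = kap t c (g y) ↔ kap t c x = kap t c y)
    (x : Fin ℓ) : g (x + 1) = g x + 1 ∨ g x = g (x + 1) + 1 := by
  have h1 : ((Finset.range t).filter fun c => kap t c x = kap t c (x + 1)).card = t - 1 :=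
    (main_count hs ht hl x (x + 1)).mpr (Or.inl rfl)
  have heq : ((Finset.range t).filter fun c => kap t c (g x) = kap t c (g (x + 1)))
      = ((Finset.range t).filter fun c => kap t c x = kap t c (x + 1)) := by
    apply Finset.filter_congr
    intro c hc
    rw [Finset.mem_range] at hc
    rw [hsb c hc]
  have h2 : ((Finset.range t).filter fun c =>
      kap t c (g x) = kap t c (g (x + 1))).card = t - 1 := by
    rw [heq]; exact h1
  exact (main_count hs ht hl (g x) (g (x + 1))).mp h2

lemma cast_ne_two [NeZero ℓ] (h5 : 5 ≤ ℓ) (k : ℕ) :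
    ((k + 2 : ℕ) : Fin ℓ) ≠ ((k : ℕ) : Fin ℓ) := by
  intro h
  have hv := congrArg Fin.val h
  rw [Fin.val_natCast, Fin.val_natCast] at hv
  have hmod : (k : ℕ) ≡ (k + 2 : ℕ) [MOD ℓ] := by
    unfold Nat.ModEq
    omega
  have hd := (Nat.modEq_iff_dvd' (by omega : k ≤ k + 2)).mp hmod
  have he : k + 2 - k = 2 := by omega
  rw [he] at hd
  have := Nat.le_of_dvd (by omega) hd
  omega

lemma classify [NeZero ℓ] (hs : 2 ≤ s) (ht : 2 ≤ t) (hl : ℓ = s * t) (h5 : 5 ≤ ℓ)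
    (g : Equiv.Perm (Fin ℓ))
    (hadj : ∀ x : Fin ℓ, g (x + 1) = g x + 1 ∨ g x = g (x + 1) + 1) :
    (∀ x : Fin ℓ, g x = x + g 0) ∨ (∀ x : Fin ℓ, g x = g 0 - x) := by
  have hcast : ∀ k : ℕ, ((k : ℕ) : Fin ℓ) + 1 = ((k + 1 : ℕ) : Fin ℓ) := by
    intro k
    push_cast
    ring
  have h0 := hadj 0
  rw [zero_add] at h0
  rcases h0 with hA | hB
  · left
    have key : ∀ k : ℕ, g ((k : ℕ) : Fin ℓ) = g 0 + ((k : ℕ) : Fin ℓ) ∧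
        g ((k + 1 : ℕ) : Fin ℓ) = g 0 + ((k + 1 : ℕ) : Fin ℓ) := by
      intro k
      induction k with
      | zero =>
        constructor
        · rw [Nat.cast_zero, add_zero]
        · rw [Nat.cast_one, hA]
      | succ k ih =>
        refine ⟨ih.2, ?_⟩
        have hstep := hadj ((k + 1 : ℕ) : Fin ℓ)
        rw [hcast (k + 1)] at hstep
        rcases hstep with h | h
        · rw [h, ih.2, add_assoc, hcast (k + 1)]
        · exfalso
          have : g ((k + 2 : ℕ) : Fin ℓ) = g ((k : ℕ) : Fin ℓ) := by
            have h' : g ((k + 2 : ℕ) : Fin ℓ) = g ((k + 1 : ℕ) : Fin ℓ) - 1 := by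
              rw [h]; abel
            rw [h', ih.2, ih.1, ← hcast k]
            abel
          have := g.injective this
          exact cast_ne_two h5 k this
    intro x
    have := (key x.val).1
    rw [Fin.cast_val_eq_self] at this
    rw [this, add_comm]
  · right
    have key : ∀ k : ℕ, g ((k : ℕ) : Fin ℓ) = g 0 - ((k : ℕ) : Fin ℓ) ∧
        g ((k + 1 : ℕ) : Fin ℓ) = g 0 - ((k + 1 : ℕ) : Fin ℓ) := by
      intro k
      induction k with
      | zero =>
        constructor
        · rw [Nat.cast_zero, sub_zero]
        · rw [Nat.cast_one]
          have : g 0 = g 1 + 1 := hB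
          rw [eq_comm, sub_eq_iff_eq_add]
          rw [this]
      | succ k ih =>
        refine ⟨ih.2, ?_⟩
        have hstep := hadj ((k + 1 : ℕ) : Fin ℓ)
        rw [hcast (k + 1)] at hstep
        rcases hstep with h | h
        · exfalso
          have : g ((k + 2 : ℕ) : Fin ℓ) = g ((k : ℕ) : Fin ℓ) := by
            rw [h, ih.2, ih.1, ← hcast k]
            abel
          have := g.injective this
          exact cast_ne_two h5 k this
        · have h' : g ((k + 2 : ℕ) : Fin ℓ) = g ((k + 1 : ℕ) : Fin ℓ) - 1 := by
            rw [h]; abel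
          rw [h', ih.2, ← hcast (k + 1)]
          abel
    intro x
    have := (key x.val).1
    rw [Fin.cast_val_eq_self] at this
    exact this

/-- swap evaluation in terms of values -/
lemma swap_eval [NeZero ℓ] {m : ℕ} (hm : m < ℓ) (z : Fin ℓ) :
    (Equiv.swap (0 : Fin ℓ) ((m : ℕ) : Fin ℓ)) z =
      if z.val = 0 then ((m : ℕ) : Fin ℓ) else if z.val = m then 0 else z := by
  rw [Equiv.swap_apply_def]
  have h1 : (z = 0) ↔ z.val = 0 := by
    rw [Fin.ext_iff, Fin.val_zero]
  have h2 : (z = ((m : ℕ) : Fin ℓ)) ↔ z.val = m := by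
    rw [Fin.ext_iff, Fin.val_natCast, Nat.mod_eq_of_lt hm]
  by_cases hz1 : z.val = 0
  · rw [if_pos (h1.mpr hz1), if_pos hz1]
  · rw [if_neg (fun hc => hz1 (h1.mp hc)), if_neg hz1]
    by_cases hz2 : z.val = m
    · rw [if_pos (h2.mpr hz2), if_pos hz2]
    · rw [if_neg (fun hc => hz2 (h2.mp hc)), if_neg hz2]

end Rigid

section Stab

variable {s t ℓ : ℕ}

theorem stab [NeZero ℓ] (hs : 2 ≤ s) (ht : 2 ≤ t) (hl : ℓ = s * t) (h5 : 5 ≤ ℓ)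
    (g : Equiv.Perm (Fin ℓ))
    (hP : ∀ c < t, (Pc ℓ s t c).image (fun b => b.image g) = Pc ℓ s t c)
    (hQ : (Qp ℓ s t (t + 1)).image (fun b => b.image g) = Qp ℓ s t (t + 1))
    (hQ2 : t = 2 → (Qp ℓ s t 5).image (fun b => b.image g) = Qp ℓ s t 5) :
    g = 1 := by
  have ht0 : 0 < t := by omega
  have hl0 : 0 < ℓ := lpos hs ht hl
  have htl : t ≤ ℓ := tlel hs ht hl
  have ht1 : t + 1 < ℓ := t1lt hs ht hl
  have hsb : ∀ c < t, ∀ x y : Fin ℓ, kap t c (g x) = kap t c (g y) ↔ kap t c x = kap t c y :=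
    fun c hc x y => sb_inv g c (hP c hc) hs ht hl x y
  have hadj := adj_pres hs ht hl g hsb
  have hv1 : ((1 : ℕ) : Fin ℓ).val = 1 := by
    rw [Fin.val_natCast]; exact Nat.mod_eq_of_lt (by omega)
  have hv0 : (0 : Fin ℓ).val = 0 := rfl
  have hvt1 : (((t + 1 : ℕ)) : Fin ℓ).val = t + 1 := by
    rw [Fin.val_natCast]; exact Nat.mod_eq_of_lt ht1
  have hsubval : ∀ z w : Fin ℓ, (z - w).val = (ℓ - w.val + z.val) % ℓ := by
    intro z w; rw [Fin.sub_def]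
  have hswapinv : ∀ (m : ℕ) (z : Fin ℓ),
      Equiv.swap (0 : Fin ℓ) ((m : ℕ) : Fin ℓ) (Equiv.swap (0 : Fin ℓ) ((m : ℕ) : Fin ℓ) z) = z :=
    fun m z => Equiv.swap_apply_self _ _ _
  -- swap applications at special points
  have hsp1 : ∀ m : ℕ, m < ℓ → 1 < m →
      Equiv.swap (0 : Fin ℓ) ((m : ℕ) : Fin ℓ) ((1 : ℕ) : Fin ℓ) = ((1 : ℕ) : Fin ℓ) := by
    intro m hm hm1
    rw [swap_eval hm, if_neg (by rw [hv1]; omega), if_neg (by rw [hv1]; omega)]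
  have hsp0 : ∀ m : ℕ, m < ℓ →
      Equiv.swap (0 : Fin ℓ) ((m : ℕ) : Fin ℓ) (0 : Fin ℓ) = ((m : ℕ) : Fin ℓ) := by
    intro m hm
    rw [swap_eval hm, if_pos hv0]
  rcases classify hs ht hl h5 g hadj with hA | hB
  · -- case A : g x = x + a
    have h00 : kap t 0 (0 : Fin ℓ) ≠ kap t 0 ((0 : Fin ℓ) - 1) :=
      (consec hs ht hl 0).mpr (by rw [hv0]; exact dvd_zero t)
    have hgne : kap t 0 (g 0) ≠ kap t 0 (g ((0 : Fin ℓ) - 1)) := by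
      intro hc; exact h00 ((hsb 0 ht0 0 ((0 : Fin ℓ) - 1)).mp hc)
    have hgm1 : g ((0 : Fin ℓ) - 1) = g 0 - 1 := by rw [hA ((0 : Fin ℓ) - 1)]; abel
    have hne2 : kap t 0 (g 0) ≠ kap t 0 (g 0 - 1) := by
      rw [← hgm1]; exact hgne
    have hdvd : t ∣ (g 0).val := (consec hs ht hl (g 0)).mp hne2
    obtain ⟨r', hr'⟩ := hdvd
    have hrlt : r' < s := by
      have hlt := (g 0).isLt
      rw [hr', hl] at hlt
      by_contra hc
      push_neg at hc
      have h1 : t * s ≤ t * r' := Nat.mul_le_mul_left _ hc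
      have h2 : s * t = t * s := Nat.mul_comm s t
      omega
    by_cases hr0 : r' = 0
    · -- a = 0, g = 1
      have ha0 : g 0 = 0 := by
        apply Fin.ext
        rw [hr', hr0, Nat.mul_zero, hv0]
      apply Equiv.ext
      intro x
      rw [hA x, ha0, add_zero]
      rfl
    · exfalso
      obtain ⟨i, hi, hcond⟩ := endQ hs ht hl (Equiv.swap 0 ((t + 1 : ℕ) : Fin ℓ)) g hQ
        (hswapinv (t + 1))
      have hbnd : t * r' + t ≤ ℓ := by
        have h1 : t * r' + t = t * (r' + 1) := by ring
        have h2 : t * (r' + 1) ≤ t * s := Nat.mul_le_mul_left _ (by omega)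
        have h3 : s * t = t * s := Nat.mul_comm s t
        omega
      -- point p1 = 1
      have hc1 := hcond ((1 : ℕ) : Fin ℓ) (by rw [hv1]; omega)
      rw [hsp1 (t + 1) ht1 (by omega), hA] at hc1
      have hgp1 : (((1 : ℕ) : Fin ℓ) + g 0).val = 1 + t * r' := by
        rw [Fin.val_add, hv1, hr', Nat.mod_eq_of_lt (by omega)]
      rw [swap_eval ht1, hgp1] at hc1
      -- point p0 = 0
      have hc0 := hcond 0 (by rw [hv0]; omega)
      rw [hsp0 (t + 1) ht1, hA] at hc0
      by_cases ht3 : 3 ≤ t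
      · -- t ≥ 3 : point p2 = 2
        have hv2 : ((2 : ℕ) : Fin ℓ).val = 2 := by
          rw [Fin.val_natCast]; exact Nat.mod_eq_of_lt (by omega)
        have hc2 := hcond ((2 : ℕ) : Fin ℓ) (by rw [hv2]; omega)
        have hsp2 : Equiv.swap (0 : Fin ℓ) (((t + 1 : ℕ)) : Fin ℓ) ((2 : ℕ) : Fin ℓ)
            = ((2 : ℕ) : Fin ℓ) := by
          rw [swap_eval ht1, if_neg (by rw [hv2]; omega), if_neg (by rw [hv2]; omega)]
        rw [hsp2, hA] at hc2
        have hgp2 : (((2 : ℕ) : Fin ℓ) + g 0).val = 2 + t * r' := by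
          rw [Fin.val_add, hv2, hr', Nat.mod_eq_of_lt (by omega)]
        have hnet1 : ¬ (2 + t * r' = t + 1) := by
          intro hc
          have h2 : t * r' = 0 ∨ t ≤ t * r' := by
            rcases Nat.eq_zero_or_pos r' with h | h
            · left; rw [h, Nat.mul_zero]
            · right
              calc t = t * 1 := by ring
              _ ≤ t * r' := Nat.mul_le_mul_left _ h
          omega
        rw [swap_eval ht1, hgp2, if_neg (by omega), if_neg hnet1, hgp2] at hc2
        have hir : i = r' := by
          rw [← hc2, Nat.add_mul_div_left _ _ ht0, Nat.div_eq_of_lt (by omega), Nat.zero_add]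
        by_cases hr1 : r' = 1
        · have h11 : 1 + t * r' = t + 1 := by rw [hr1]; omega
          rw [if_neg (by omega), if_pos h11, hv0, Nat.zero_div] at hc1
          omega
        · have hnet1' : ¬ (1 + t * r' = t + 1) := by
            intro hc
            have htt : t * r' = t * 1 := by rw [Nat.mul_one]; omega
            have := Nat.eq_of_mul_eq_mul_left ht0 htt
            omega
          by_cases hrs : r' = s - 1
          · have hts : t * r' + t = ℓ := by
              have h1 : t * r' + t = t * (s - 1 + 1) := by rw [hrs]; ring
              rw [show s - 1 + 1 = s by omega] at h1
              have h3 : s * t = t * s := Nat.mul_comm s t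
              omega
            have hgp0 : ((((t + 1 : ℕ)) : Fin ℓ) + g 0).val = 1 := by
              rw [Fin.val_add, hvt1, hr']
              have he : t + 1 + t * r' = ℓ + 1 := by omega
              rw [he, Nat.add_mod_left, Nat.mod_eq_of_lt (by omega)]
            rw [swap_eval ht1, hgp0, if_neg (by omega), if_neg (by omega), hgp0] at hc0
            rw [Nat.div_eq_of_lt (by omega)] at hc0
            omega
          · have hbnd2 : t * r' + 2 * t ≤ ℓ := by
              have h1 : t * r' + 2 * t = t * (r' + 2) := by ring
              have h2 : t * (r' + 2) ≤ t * s := Nat.mul_le_mul_left _ (by omega)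
              have h3 : s * t = t * s := Nat.mul_comm s t
              omega
            have hgp0 : ((((t + 1 : ℕ)) : Fin ℓ) + g 0).val = t + 1 + t * r' := by
              rw [Fin.val_add, hvt1, hr', Nat.mod_eq_of_lt (by omega)]
            have hnt : ¬ (t + 1 + t * r' = t + 1) := by
              intro hc
              have h0 : t * r' = 0 := by omega
              rcases Nat.mul_eq_zero.mp h0 with h | h <;> omega
            rw [swap_eval ht1, hgp0, if_neg (by omega), if_neg hnt, hgp0] at hc0
            have hdiv : (t + 1 + t * r') / t = r' + 1 := by
              have he : t + 1 + t * r' = 1 + t * (r' + 1) := by ring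
              rw [he, Nat.add_mul_div_left _ _ ht0, Nat.div_eq_of_lt (by omega), Nat.zero_add]
            rw [hdiv] at hc0
            omega
      · -- t = 2
        have ht2 : t = 2 := by omega
        subst ht2
        have hs3 : 3 ≤ s := by omega
        by_cases hr1 : r' = 1
        · have h11 : 1 + 2 * r' = 2 + 1 := by omega
          rw [if_neg (by omega), if_pos h11, hv0, Nat.zero_div] at hc1
          have hgp0 : ((((2 + 1 : ℕ)) : Fin ℓ) + g 0).val = 5 := by
            rw [Fin.val_add, hvt1, hr', hr1, Nat.mod_eq_of_lt (by omega)]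
          rw [swap_eval ht1, hgp0, if_neg (by omega), if_neg (by omega), hgp0] at hc0
          omega
        · rw [if_neg (by omega), if_neg (by omega), hgp1] at hc1
          by_cases hrs : r' = s - 1
          · have hgp0 : ((((2 + 1 : ℕ)) : Fin ℓ) + g 0).val = 1 := by
              rw [Fin.val_add, hvt1, hr', hrs]
              have he : 2 + 1 + 2 * (s - 1) = ℓ + 1 := by omega
              rw [he, Nat.add_mod_left, Nat.mod_eq_of_lt (by omega)]
            rw [swap_eval ht1, hgp0, if_neg (by omega), if_neg (by omega), hgp0] at hc0
            omega
          · have hgp0 : ((((2 + 1 : ℕ)) : Fin ℓ) + g 0).val = 3 + 2 * r' := by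
              rw [Fin.val_add, hvt1, hr', Nat.mod_eq_of_lt (by omega)]
            rw [swap_eval ht1, hgp0, if_neg (by omega), if_neg (by omega), hgp0] at hc0
            omega
  · -- case B : g x = a - x, derive contradiction
    exfalso
    have hvx1 : (((t - 1 : ℕ)) : Fin ℓ).val = t - 1 := by
      rw [Fin.val_natCast]; exact Nat.mod_eq_of_lt (by omega)
    have hcastt : (((t - 1 : ℕ)) : Fin ℓ) + 1 = ((t : ℕ) : Fin ℓ) := by
      have h' : ((t - 1 : ℕ) : Fin ℓ) + ((1 : ℕ) : Fin ℓ) = ((t - 1 + 1 : ℕ) : Fin ℓ) := by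
        push_cast; ring
      rw [Nat.cast_one] at h'
      rw [h', show t - 1 + 1 = t by omega]
    have hvt : ((t : ℕ) : Fin ℓ).val = t := by
      rw [Fin.val_natCast]
      exact Nat.mod_eq_of_lt (by omega)
    have hk1 : kap t 0 (((t - 1 : ℕ)) : Fin ℓ) = 0 := by
      rw [kap0_eq, hvx1]; exact Nat.div_eq_of_lt (by omega)
    have hk2 : kap t 0 ((((t - 1 : ℕ)) : Fin ℓ) + 1) = 1 := by
      rw [hcastt, kap0_eq, hvt]
      exact Nat.div_self ht0
    have hne : kap t 0 (((t - 1 : ℕ)) : Fin ℓ) ≠ kap t 0 ((((t - 1 : ℕ)) : Fin ℓ) + 1) := by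
      rw [hk1, hk2]; omega
    have hgne : kap t 0 (g (((t - 1 : ℕ)) : Fin ℓ)) ≠
        kap t 0 (g ((((t - 1 : ℕ)) : Fin ℓ) + 1)) := by
      intro hc; exact hne ((hsb 0 ht0 _ _).mp hc)
    have hgy : g ((((t - 1 : ℕ)) : Fin ℓ) + 1) = g (((t - 1 : ℕ)) : Fin ℓ) - 1 := by
      rw [hB ((((t - 1 : ℕ)) : Fin ℓ) + 1), hB (((t - 1 : ℕ)) : Fin ℓ)]; abel
    rw [hgy] at hgne
    have hu : t ∣ (g (((t - 1 : ℕ)) : Fin ℓ)).val := (consec hs ht hl _).mp hgne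
    by_cases ht3 : 3 ≤ t
    · -- second pair with kap 1
      have hvx2 : (((t - 2 : ℕ)) : Fin ℓ).val = t - 2 := by
        rw [Fin.val_natCast]; exact Nat.mod_eq_of_lt (by omega)
      have hcastt2 : (((t - 2 : ℕ)) : Fin ℓ) + 1 = (((t - 1 : ℕ)) : Fin ℓ) := by
        have h' : ((t - 2 : ℕ) : Fin ℓ) + ((1 : ℕ) : Fin ℓ) = ((t - 2 + 1 : ℕ) : Fin ℓ) := by
          push_cast; ring
        rw [Nat.cast_one] at h'
        rw [h', show t - 2 + 1 = t - 1 by omega]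
      have hk1' : kap t 1 (((t - 2 : ℕ)) : Fin ℓ) = 0 := by
        unfold kap
        rw [hvx2, Nat.mod_eq_of_lt (by omega)]
        exact Nat.div_eq_of_lt (by omega)
      have hk2' : kap t 1 (((t - 1 : ℕ)) : Fin ℓ) = 1 := by
        unfold kap
        rw [hvx1, Nat.mod_eq_of_lt (by omega), show t - 1 + 1 = t by omega]
        exact Nat.div_self ht0
      have hne' : kap t 1 (((t - 2 : ℕ)) : Fin ℓ) ≠ kap t 1 ((((t - 2 : ℕ)) : Fin ℓ) + 1) := by
        rw [hcastt2, hk1', hk2']; omega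
      have hgne' : kap t 1 (g (((t - 2 : ℕ)) : Fin ℓ)) ≠
          kap t 1 (g ((((t - 2 : ℕ)) : Fin ℓ) + 1)) := by
        intro hc; exact hne' ((hsb 1 (by omega) _ _).mp hc)
      rw [kap_one hs ht hl, kap_one hs ht hl] at hgne'
      have hgy' : g ((((t - 2 : ℕ)) : Fin ℓ) + 1) + 1 = g (((t - 2 : ℕ)) : Fin ℓ) := by
        rw [hB ((((t - 2 : ℕ)) : Fin ℓ) + 1), hB (((t - 2 : ℕ)) : Fin ℓ)]; abel
      rw [hgy'] at hgne'
      have hgsub : g (((t - 2 : ℕ)) : Fin ℓ) = (g (((t - 2 : ℕ)) : Fin ℓ) + 1) - 1 := by abel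
      have hv : t ∣ (g (((t - 2 : ℕ)) : Fin ℓ) + 1).val := by
        apply (consec hs ht hl (g (((t - 2 : ℕ)) : Fin ℓ) + 1)).mp
        intro hc
        apply hgne'
        rw [← hgsub] at hc
        exact hc
      have hrel : g (((t - 2 : ℕ)) : Fin ℓ) + 1
          = g (((t - 1 : ℕ)) : Fin ℓ) + ((2 : ℕ) : Fin ℓ) := by
        rw [hB (((t - 2 : ℕ)) : Fin ℓ), hB (((t - 1 : ℕ)) : Fin ℓ), ← hcastt2]
        have h2 : ((2 : ℕ) : Fin ℓ) = 1 + 1 := by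
          push_cast; ring
        rw [h2]
        abel
      rw [hrel] at hv
      exact div2_contra hs ht3 hl _ hu hv
    · -- t = 2
      have ht2 : t = 2 := by omega
      subst ht2
      have hs3 : 3 ≤ s := by omega
      have hl6 : 6 ≤ ℓ := by omega
      have hgval : ∀ z : Fin ℓ, (g z).val = (ℓ - z.val + (g 0).val) % ℓ := by
        intro z
        rw [hB z, hsubval]
      set av := (g 0).val with havdef
      have havlt : av < ℓ := (g 0).isLt
      have hu1 : 2 ∣ (g ((1 : ℕ) : Fin ℓ)).val := by
        have he : ((2 - 1 : ℕ) : Fin ℓ) = ((1 : ℕ) : Fin ℓ) := by norm_num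
        rw [← he]
        exact hu
      have huval : (g (((1 : ℕ)) : Fin ℓ)).val = (ℓ - 1 + av) % ℓ := by
        rw [hgval, hv1]
      have hodd : av % 2 = 1 := by
        rcases Nat.eq_zero_or_pos av with h0 | hpos
        · exfalso
          rw [huval, h0, Nat.add_zero, Nat.mod_eq_of_lt (by omega)] at hu1
          omega
        · have hval2 : (ℓ - 1 + av) % ℓ = av - 1 := by
            have he : ℓ - 1 + av = ℓ + (av - 1) := by omega
            rw [he, Nat.add_mod_left, Nat.mod_eq_of_lt (by omega)]
          rw [huval, hval2] at hu1
          omega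
      have hval2 : (ℓ - 1 + av) % ℓ = av - 1 := by
        have he : ℓ - 1 + av = ℓ + (av - 1) := by omega
        rw [he, Nat.add_mod_left, Nat.mod_eq_of_lt (by omega)]
      rw [hval2] at huval
      obtain ⟨i, hi, hcond⟩ := endQ hs ht hl (Equiv.swap 0 ((2 + 1 : ℕ) : Fin ℓ)) g hQ
        (hswapinv (2 + 1))
      have hc1 := hcond ((1 : ℕ) : Fin ℓ) (by rw [hv1]; omega)
      rw [hsp1 (2 + 1) ht1 (by omega)] at hc1
      rw [swap_eval ht1, huval] at hc1
      have hc0 := hcond 0 (by rw [hv0]; omega)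
      rw [hsp0 (2 + 1) ht1] at hc0
      have hg3 : (g (((2 + 1 : ℕ)) : Fin ℓ)).val = (ℓ - 3 + av) % ℓ := by
        rw [hgval, hvt1]
      rw [swap_eval ht1, hg3] at hc0
      by_cases hav1 : av = 1
      · rw [hav1] at hc1
        rw [if_pos (by omega), hvt1] at hc1
        have hmod : (ℓ - 3 + av) % ℓ = ℓ - 2 := by
          rw [hav1]
          rw [Nat.mod_eq_of_lt (by omega)]
          omega
        rw [hmod, if_neg (by omega), if_neg (by omega), hg3, hmod] at hc0
        omega
      · have hav3 : 3 ≤ av := by omega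
        rw [if_neg (by omega), if_neg (by omega), huval] at hc1
        have hmod : (ℓ - 3 + av) % ℓ = av - 3 := by
          have he : ℓ - 3 + av = ℓ + (av - 3) := by omega
          rw [he, Nat.add_mod_left, Nat.mod_eq_of_lt (by omega)]
        rw [hmod] at hc0
        by_cases hav33 : av = 3
        · rw [if_pos (by omega), hvt1] at hc0
          obtain ⟨i2, hi2, hcond2⟩ := endQ hs ht hl (Equiv.swap 0 ((5 : ℕ) : Fin ℓ)) g
            (hQ2 rfl) (hswapinv 5)
          have h5l : 5 < ℓ := by omega
          have hv5 : (((5 : ℕ)) : Fin ℓ).val = 5 := by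
            rw [Fin.val_natCast]; exact Nat.mod_eq_of_lt h5l
          have hc1' := hcond2 ((1 : ℕ) : Fin ℓ) (by rw [hv1]; omega)
          rw [hsp1 5 h5l (by omega)] at hc1'
          rw [swap_eval h5l, huval] at hc1'
          rw [if_neg (by omega), if_neg (by omega), huval] at hc1'
          have hc0' := hcond2 0 (by rw [hv0]; omega)
          rw [hsp0 5 h5l] at hc0'
          have hg5 : (g (((5 : ℕ)) : Fin ℓ)).val = (ℓ - 5 + av) % ℓ := by
            rw [hgval, hv5]
          have hmod5 : (ℓ - 5 + av) % ℓ = ℓ - 2 := by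
            rw [hav33]
            rw [Nat.mod_eq_of_lt (by omega)]
            omega
          rw [swap_eval h5l, hg5, hmod5, if_neg (by omega), if_neg (by omega), hg5, hmod5] at hc0'
          omega
        · rw [if_neg (by omega), if_neg (by omega), hg3, hmod] at hc0
          omega

end Stab


section CountN

/-- product formula for the number of partitions -/
def Fprod (s t : ℕ) : ℕ := ∏ i ∈ Finset.range s, Nat.choose ((i + 1) * t - 1) (t - 1)

lemma fact_ident (t : ℕ) (ht : 1 ≤ t) :
    ∀ s : ℕ, (s * t).factorial = t.factorial ^ s * s.factorial * Fprod s t := by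
  intro s
  induction s with
  | zero => simp [Fprod]
  | succ s ih =>
    have hkey := Nat.choose_mul_factorial_mul_factorial
      (show t - 1 ≤ s * t + t - 1 by omega)
    have hsub : s * t + t - 1 - (t - 1) = s * t := by omega
    rw [hsub] at hkey
    have h1 : (s + 1) * t = s * t + t := by ring
    have h2 : s * t + t = (s * t + t - 1) + 1 := by omega
    rw [h1, h2, Nat.factorial_succ, ← hkey, ih]
    have harg : (s + 1) * t - 1 = s * t + t - 1 := by rw [h1]
    have h3 : Fprod (s + 1) t = Fprod s t * Nat.choose (s * t + t - 1) (t - 1) := by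
      rw [Fprod, Fprod, Finset.prod_range_succ, harg]
    rw [h3]
    have h5 : s * t + t - 1 + 1 = t * (s + 1) := by
      have h6 : t * (s + 1) = s * t + t := by ring
      omega
    have h4 : Nat.factorial t = t * Nat.factorial (t - 1) := by
      obtain ⟨t', rfl⟩ : ∃ t', t = t' + 1 := ⟨t - 1, by omega⟩
      rw [Nat.factorial_succ, Nat.add_sub_cancel]
    rw [h5, pow_succ, Nat.factorial_succ, h4]
    ring

lemma two_pow_le_aux : ∀ k : ℕ, k + 1 ≤ 2 ^ k := by
  intro k
  induction k with
  | zero => norm_num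
  | succ k ih =>
    have : 2 ^ (k + 1) = 2 ^ k + 2 ^ k := by ring
    have h2 : 1 ≤ 2 ^ k := Nat.one_le_two_pow
    omega

lemma choose_lb (t : ℕ) (ht : 3 ≤ t) : 2 ^ t < Nat.choose (2 * t - 1) (t - 1) := by
  have hdouble : 2 * Nat.choose (2 * t - 1) (t - 1) = Nat.centralBinom t := by
    have hp := Nat.choose_succ_succ (2 * t - 1) (t - 1)
    have ha : (2 * t - 1) + 1 = 2 * t := by omega
    have hb : (t - 1) + 1 = t := by omega
    rw [Nat.succ_eq_add_one, Nat.succ_eq_add_one, ha, hb] at hp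
    have hsymm := Nat.choose_symm (show t ≤ 2 * t - 1 by omega)
    have hc : 2 * t - 1 - t = t - 1 := by omega
    rw [hc] at hsymm
    rw [Nat.centralBinom]
    omega
  have hmain : 2 ^ (t + 1) < Nat.centralBinom t := by
    by_cases h4 : 4 ≤ t
    · have hfour := Nat.four_pow_lt_mul_centralBinom t h4
      have hle : t ≤ 2 ^ (t - 1) := by
        have := two_pow_le_aux (t - 1)
        omega
      have hfour' : (4 : ℕ) ^ t = 2 ^ (t - 1) * 2 ^ (t + 1) := by
        have : (4 : ℕ) = 2 ^ 2 := by norm_num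
        rw [this, ← pow_mul, ← pow_add]
        congr 1
        omega
      have h1 : t * 2 ^ (t + 1) ≤ 2 ^ (t - 1) * 2 ^ (t + 1) :=
        Nat.mul_le_mul_right _ hle
      rw [← hfour'] at h1
      have h2 : t * 2 ^ (t + 1) < t * Nat.centralBinom t := lt_of_le_of_lt h1 hfour
      exact Nat.lt_of_mul_lt_mul_left h2
    · have ht3 : t = 3 := by omega
      subst ht3
      norm_num [Nat.centralBinom, Nat.choose]
  omega

lemma Fprod_ge (s t : ℕ) (hs : 2 ≤ s) (ht : 1 ≤ t) :
    Nat.choose (2 * t - 1) (t - 1) ≤ Fprod s t := by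
  have h1 : ∀ i ∈ Finset.range s, 1 ≤ Nat.choose ((i + 1) * t - 1) (t - 1) := by
    intro i _
    apply Nat.choose_pos
    have : t ≤ (i + 1) * t := by
      calc t = 1 * t := by ring
      _ ≤ (i + 1) * t := Nat.mul_le_mul_right _ (by omega)
    omega
  have h2 := Finset.single_le_prod' h1 (Finset.mem_range.mpr (show 1 < s by omega))
  have h3 : (1 + 1) * t - 1 = 2 * t - 1 := by ring_nf
  rw [h3] at h2
  exact h2

lemma Fprod_ge2 (s : ℕ) (hs : 3 ≤ s) : 15 ≤ Fprod s 2 := by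
  have hsub : ({1, 2} : Finset ℕ) ⊆ Finset.range s := by
    intro x hx
    rw [Finset.mem_insert, Finset.mem_singleton] at hx
    rw [Finset.mem_range]
    omega
  have h1 : ∀ i ∈ Finset.range s, i ∉ ({1, 2} : Finset ℕ) →
      1 ≤ Nat.choose ((i + 1) * 2 - 1) (2 - 1) := by
    intro i _ _
    apply Nat.choose_pos
    omega
  have h2 := Finset.prod_le_prod_of_subset_of_one_le' hsub h1
  have h3 : (∏ i ∈ ({1, 2} : Finset ℕ), Nat.choose ((i + 1) * 2 - 1) (2 - 1)) = 15 := by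
    decide
  rw [h3] at h2
  exact h2

lemma logb_bound (k n : ℕ) (h : 2 ^ k < n) : (k : ℝ) < Real.logb 2 n := by
  have h1 : ((2 : ℝ)) ^ (k : ℕ) < (n : ℝ) := by exact_mod_cast h
  have h2 : Real.logb 2 ((2 : ℝ) ^ (k : ℕ)) < Real.logb 2 n :=
    Real.logb_lt_logb (by norm_num) (by positivity) h1
  rwa [← Real.rpow_natCast 2 k, Real.logb_rpow (by norm_num) (by norm_num)] at h2

end CountN

end Stmt9


open Stmt9 in
/-- Let `s, t ≥ 2` with `ℓ = s·t ≥ 5`, and let `Sym(ℓ)` act on the set of partitions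
of `{1,…,ℓ}` into `s` blocks of size `t`, of which there are
`n = ℓ! / ((t!)^s · s!)`. Then the minimal base size is less than `log₂ n + 1`,
i.e. there is a base (a set of such partitions with trivial pointwise stabilizer in
`Sym(ℓ)`) of size less than `log₂ n + 1`. -/
theorem stmt9 (s t ℓ : ℕ) (hs : 2 ≤ s) (ht : 2 ≤ t) (hℓ : ℓ = s * t) (h5 : 5 ≤ ℓ)
    (n : ℕ) (hn : n = ℓ.factorial / (t.factorial ^ s * s.factorial)) :
    ∃ Bse : Finset (Finset (Finset (Fin ℓ))),
      (∀ P ∈ Bse, P.card = s ∧ (∀ b ∈ P, b.card = t) ∧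
        ∀ x : Fin ℓ, ∃! b : Finset (Fin ℓ), b ∈ P ∧ x ∈ b) ∧
      (∀ g : Equiv.Perm (Fin ℓ),
        (∀ P ∈ Bse, Finset.image (fun b => Finset.image (⇑g) b) P = P) → g = 1) ∧
      (Bse.card : ℝ) < Real.logb 2 (n : ℝ) + 1 := by
  haveI : NeZero ℓ := ⟨by omega⟩
  have htl : t ≤ ℓ := tlel hs ht hℓ
  -- the value of n
  have hident := fact_ident t (by omega) s
  rw [← hℓ] at hident
  have hnF : n = Fprod s t := by
    rw [hn, hident, Nat.mul_div_cancel_left]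
    positivity
  refine ⟨((Finset.range t).image (Pc ℓ s t)) ∪
    (if t = 2 then {Qp ℓ s t (t + 1), Qp ℓ s t 5} else {Qp ℓ s t (t + 1)}), ?_, ?_, ?_⟩
  · -- each element is a valid partition
    intro P hP
    have hQval : ∀ m : ℕ, (Qp ℓ s t m).card = s ∧ (∀ b ∈ Qp ℓ s t m, b.card = t) ∧
        (∀ x : Fin ℓ, ∃! b : Finset (Fin ℓ), b ∈ Qp ℓ s t m ∧ x ∈ b) := by
      intro m
      apply perm_part
      · exact Pc_card hs ht hℓ (by omega)
      · intro b hb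
        obtain ⟨i, hi, rfl⟩ := Pc_mem.mp hb
        exact blk_card hs ht hℓ (by omega) hi
      · exact Pc_uniq hs ht hℓ
    rw [Finset.mem_union] at hP
    rcases hP with hP | hP
    · obtain ⟨c, hc, rfl⟩ := Finset.mem_image.mp hP
      rw [Finset.mem_range] at hc
      have hcl : c < ℓ := lt_of_lt_of_le hc htl
      refine ⟨Pc_card hs ht hℓ hcl, ?_, Pc_uniq hs ht hℓ⟩
      intro b hb
      obtain ⟨i, hi, rfl⟩ := Pc_mem.mp hb
      exact blk_card hs ht hℓ hcl hi
    · by_cases h2 : t = 2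
      · rw [if_pos h2, Finset.mem_insert, Finset.mem_singleton] at hP
        rcases hP with rfl | rfl
        · exact hQval _
        · exact hQval _
      · rw [if_neg h2, Finset.mem_singleton] at hP
        subst hP
        exact hQval _
  · -- trivial stabilizer
    intro g hg
    apply stab hs ht hℓ h5 g
    · intro c hc
      apply hg
      apply Finset.mem_union_left
      exact Finset.mem_image_of_mem _ (Finset.mem_range.mpr hc)
    · apply hg
      apply Finset.mem_union_right
      by_cases h2 : t = 2
      · rw [if_pos h2]
        exact Finset.mem_insert_self _ _
      · rw [if_neg h2]
        exact Finset.mem_singleton_self _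
    · intro h2
      apply hg
      apply Finset.mem_union_right
      rw [if_pos h2]
      exact Finset.mem_insert_of_mem (Finset.mem_singleton_self _)
  · -- cardinality bound
    have himg : ((Finset.range t).image (Pc ℓ s t)).card ≤ t := by
      calc ((Finset.range t).image (Pc ℓ s t)).card ≤ (Finset.range t).card :=
        Finset.card_image_le
      _ = t := Finset.card_range t
    by_cases h2 : t = 2
    · rw [if_pos h2]
      have hcard : (((Finset.range t).image (Pc ℓ s t)) ∪
          {Qp ℓ s t (t + 1), Qp ℓ s t 5}).card ≤ 4 := by
        calc (((Finset.range t).image (Pc ℓ s t)) ∪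
            {Qp ℓ s t (t + 1), Qp ℓ s t 5}).card
            ≤ ((Finset.range t).image (Pc ℓ s t)).card +
              ({Qp ℓ s t (t + 1), Qp ℓ s t 5} : Finset _).card := Finset.card_union_le _ _
        _ ≤ t + 2 := by
            have h3 : ({Qp ℓ s t (t + 1), Qp ℓ s t 5} : Finset _).card ≤ 2 := by
              apply le_trans (Finset.card_insert_le _ _)
              rw [Finset.card_singleton]
            omega
        _ = 4 := by omega
      have hs3 : 3 ≤ s := by
        have h' : ℓ = s * 2 := by rw [hℓ, h2]
        omega
      have hn15 : 15 ≤ n := by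
        rw [hnF, h2]
        exact Fprod_ge2 s hs3
      have hlb : (3 : ℝ) < Real.logb 2 n := by
        have := logb_bound 3 n (lt_of_lt_of_le (by norm_num) hn15)
        exact_mod_cast this
      have hc4 : ((((Finset.range t).image (Pc ℓ s t)) ∪
          {Qp ℓ s t (t + 1), Qp ℓ s t 5}).card : ℝ) ≤ 4 := by
        exact_mod_cast hcard
      linarith
    · rw [if_neg h2]
      have ht3 : 3 ≤ t := by omega
      have hcard : (((Finset.range t).image (Pc ℓ s t)) ∪
          {Qp ℓ s t (t + 1)}).card ≤ t + 1 := by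
        calc (((Finset.range t).image (Pc ℓ s t)) ∪ {Qp ℓ s t (t + 1)}).card
            ≤ ((Finset.range t).image (Pc ℓ s t)).card +
              ({Qp ℓ s t (t + 1)} : Finset _).card := Finset.card_union_le _ _
        _ ≤ t + 1 := by rw [Finset.card_singleton]; omega
      have hnlb : 2 ^ t < n := by
        rw [hnF]
        calc 2 ^ t < Nat.choose (2 * t - 1) (t - 1) := choose_lb t ht3
        _ ≤ Fprod s t := Fprod_ge s t hs (by omega)
      have hlb : (t : ℝ) < Real.logb 2 n := logb_bound t n hnlb
      have hcr : ((((Finset.range t).image (Pc ℓ s t)) ∪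
          {Qp ℓ s t (t + 1)}).card : ℝ) ≤ (t : ℝ) + 1 := by
        exact_mod_cast hcard
      linarith
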